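/- Soundness of the lower end of the robust satisfaction interval: for every STL formula φ over a finite set Y of variables, every finite signal σ = u₀,…,u_{n−1} ∈ (ℝ^Y)^*, and every k ∈ ℕ, if inf(RoSI(φ,σ,k)) > 0 then the suffix σ[k..|σ|−1] belongs to the infimum finite semantics ⟦φ⟧_inf. -/

import Mathlib

namespace STLpaper

/-- Discrete-time STL formulas over a set `Y` of variables:
`⊤ | y > c | y < c | ¬φ | φ ∨ φ' | 𝒳 φ | φ U_{[i,j]} φ'` with `i ≤ j`, `i j ∈ ℕ ∪ {+∞}`. -/
inductive STL (Y : Type) : Type where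
  | top : STL Y
  | gt : Y → ℝ → STL Y
  | lt : Y → ℝ → STL Y
  | neg : STL Y → STL Y
  | or : STL Y → STL Y → STL Y
  | next : STL Y → STL Y
  | untl : (i j : ℕ∞) → i ≤ j → STL Y → STL Y → STL Y

variable {Y : Type}

/-- The satisfaction relation `(σ, k) ⊨ φ` for an infinite signal `σ : ℕ → Y → ℝ`. -/
def Sat (σ : ℕ → Y → ℝ) : STL Y → ℕ → Prop
  | .top, _ => True
  | .gt y c, k => σ k y > c
  | .lt y c, k => σ k y < c
  | .neg φ, k => ¬ Sat σ φ k
  | .or φ ψ, k => Sat σ φ k ∨ Sat σ ψ k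
  | .next φ, k => Sat σ φ (k + 1)
  | .untl i j _ φ ψ, k =>
      ∃ l : ℕ, ((k : ℕ∞) + i ≤ (l : ℕ∞) ∧ (l : ℕ∞) ≤ (k : ℕ∞) + j) ∧
        Sat σ ψ l ∧ ∀ m : ℕ, k ≤ m → m ≤ l → Sat σ φ m

/-- The robust semantics `ρ(φ, σ, k) ∈ ℝ ∪ {±∞}` for an infinite signal `σ`. -/
noncomputable def Rob (σ : ℕ → Y → ℝ) : STL Y → ℕ → EReal
  | .top, _ => ⊤
  | .gt y c, k => ((σ k y - c : ℝ) : EReal)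
  | .lt y c, k => ((-(σ k y) + c : ℝ) : EReal)
  | .neg φ, k => - Rob σ φ k
  | .or φ ψ, k => max (Rob σ φ k) (Rob σ ψ k)
  | .next φ, k => Rob σ φ (k + 1)
  | .untl i j _ φ ψ, k =>
      ⨆ l ∈ {l : ℕ | (k : ℕ∞) + i ≤ (l : ℕ∞) ∧ (l : ℕ∞) ≤ (k : ℕ∞) + j},
        min (Rob σ ψ l) (⨅ m ∈ Finset.Icc k l, Rob σ φ m)

/-- Concatenation `σ · σ'` of a finite signal with an infinite one. -/
def cat (σ : List (Y → ℝ)) (σ' : ℕ → Y → ℝ) : ℕ → Y → ℝ :=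
  fun n => if h : n < σ.length then σ.get ⟨n, h⟩ else σ' (n - σ.length)

/-- Supremum finite semantics `⟦φ⟧_sup`. -/
def supSem (φ : STL Y) : Set (List (Y → ℝ)) :=
  {σ | ∃ σ' : ℕ → Y → ℝ, Sat (cat σ σ') φ 0}

/-- Infimum finite semantics `⟦φ⟧_inf`. -/
def infSem (φ : STL Y) : Set (List (Y → ℝ)) :=
  {σ | ∀ σ' : ℕ → Y → ℝ, Sat (cat σ σ') φ 0}

/-- Upper end of the robust satisfaction interval `RoSI(φ, σ, k)`. -/
noncomputable def RoSIsup (φ : STL Y) (σ : List (Y → ℝ)) (k : ℕ) : EReal :=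
  ⨆ σ' : ℕ → Y → ℝ, Rob (cat σ σ') φ k

/-- Lower end of the robust satisfaction interval `RoSI(φ, σ, k)`. -/
noncomputable def RoSIinf (φ : STL Y) (σ : List (Y → ℝ)) (k : ℕ) : EReal :=
  ⨅ σ' : ℕ → Y → ℝ, Rob (cat σ σ') φ k

/-- The inductively computed interval `[ρ](φ, σ, k)`, as a pair `(inf, sup)`. -/
noncomputable def finRob (σ : List (Y → ℝ)) : STL Y → ℕ → EReal × EReal
  | .top, _ => (⊤, ⊤)
  | .gt y c, k =>
      if h : k < σ.length then
        (((σ.get ⟨k, h⟩ y - c : ℝ) : EReal), ((σ.get ⟨k, h⟩ y - c : ℝ) : EReal))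
      else (⊥, ⊤)
  | .lt y c, k =>
      if h : k < σ.length then
        (((-(σ.get ⟨k, h⟩ y) + c : ℝ) : EReal), ((-(σ.get ⟨k, h⟩ y) + c : ℝ) : EReal))
      else (⊥, ⊤)
  | .neg φ, k => (- (finRob σ φ k).2, - (finRob σ φ k).1)
  | .or φ ψ, k =>
      (max (finRob σ φ k).1 (finRob σ ψ k).1, max (finRob σ φ k).2 (finRob σ ψ k).2)
  | .next φ, k => finRob σ φ (k + 1)
  | .untl i j _ φ ψ, k =>
      (⨆ l ∈ {l : ℕ | (k : ℕ∞) + i ≤ (l : ℕ∞) ∧ (l : ℕ∞) ≤ (k : ℕ∞) + j},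
          min ((finRob σ ψ l).1) (⨅ m ∈ Finset.Icc k l, (finRob σ φ m).1),
       ⨆ l ∈ {l : ℕ | (k : ℕ∞) + i ≤ (l : ℕ∞) ∧ (l : ℕ∞) ≤ (k : ℕ∞) + j},
          min ((finRob σ ψ l).2) (⨅ m ∈ Finset.Icc k l, (finRob σ φ m).2))

end STLpaper


namespace STLpaper

variable {Y : Type}

private lemma enat_cancel {a b : ℕ∞} {k : ℕ} (h : a + k ≤ b + k) : a ≤ b :=
  (WithTop.add_le_add_iff_right (by exact_mod_cast WithTop.coe_ne_top)).mp h

lemma rob_sat (σ : ℕ → Y → ℝ) (φ : STL Y) :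
    ∀ k, (0 < Rob σ φ k → Sat σ φ k) ∧ (Sat σ φ k → 0 ≤ Rob σ φ k) := by
  induction φ with
  | top => intro k; exact ⟨fun _ => trivial, fun _ => le_top⟩
  | gt y c =>
    intro k
    constructor
    · intro h
      simp only [Rob] at h
      have : (0:ℝ) < σ k y - c := by exact_mod_cast h
      simp only [Sat]; linarith
    · intro h
      simp only [Sat] at h
      simp only [Rob]
      have : (0:ℝ) ≤ σ k y - c := by linarith
      exact_mod_cast this
  | lt y c =>
    intro k
    constructor
    · intro h
      simp only [Rob] at h
      have : (0:ℝ) < -(σ k y) + c := by exact_mod_cast h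
      simp only [Sat]; linarith
    · intro h
      simp only [Sat] at h
      simp only [Rob]
      have : (0:ℝ) ≤ -(σ k y) + c := by linarith
      exact_mod_cast this
  | neg φ ih =>
    intro k
    simp only [Rob, Sat]
    have h1 : (0:EReal) < -Rob σ φ k ↔ Rob σ φ k < 0 := by
      rw [← neg_zero, EReal.neg_lt_neg_iff, neg_zero]
    have h2 : (0:EReal) ≤ -Rob σ φ k ↔ Rob σ φ k ≤ 0 := by
      rw [← neg_zero, EReal.neg_le_neg_iff, neg_zero]
    constructor
    · intro h hs
      exact absurd ((ih k).2 hs) (not_le.mpr (h1.mp h))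
    · intro hs
      exact h2.mpr (not_lt.mp fun hpos => hs ((ih k).1 hpos))
  | or φ ψ ih1 ih2 =>
    intro k
    constructor
    · intro h
      simp only [Rob, lt_max_iff] at h
      rcases h with h | h
      · exact Or.inl ((ih1 k).1 h)
      · exact Or.inr ((ih2 k).1 h)
    · intro hs
      simp only [Rob, le_max_iff]
      rcases hs with hs | hs
      · exact Or.inl ((ih1 k).2 hs)
      · exact Or.inr ((ih2 k).2 hs)
  | next φ ih =>
    intro k
    exact ⟨fun h => (ih (k+1)).1 h, fun h => (ih (k+1)).2 h⟩
  | untl i j hij φ ψ ih1 ih2 =>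
    intro k
    constructor
    · intro h
      simp only [Rob, lt_iSup_iff] at h
      obtain ⟨l, hl, hmin⟩ := h
      simp only [Set.mem_setOf_eq] at hl
      have hψ : 0 < Rob σ ψ l := lt_of_lt_of_le hmin (min_le_left _ _)
      have hφ : ∀ m ∈ Finset.Icc k l, 0 < Rob σ φ m := by
        intro m hm
        exact lt_of_lt_of_le (lt_of_lt_of_le hmin (min_le_right _ _)) (biInf_le _ hm)
      refine ⟨l, hl, (ih2 l).1 hψ, fun m h1 h2 => (ih1 m).1 (hφ m (Finset.mem_Icc.mpr ⟨h1, h2⟩))⟩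
    · rintro ⟨l, hl, hψ, hφ⟩
      simp only [Rob]
      refine le_trans ?_ (le_iSup₂ (f := fun l _ =>
        min (Rob σ ψ l) (⨅ m ∈ Finset.Icc k l, Rob σ φ m)) l hl)
      refine le_min ((ih2 l).2 hψ) (le_iInf₂ fun m hm => ?_)
      rw [Finset.mem_Icc] at hm
      exact (ih1 m).2 (hφ m hm.1 hm.2)

lemma sat_shift (σ : ℕ → Y → ℝ) (k : ℕ) (φ : STL Y) :
    ∀ m, Sat σ φ (m + k) ↔ Sat (fun n => σ (n + k)) φ m := by
  induction φ with
  | top => intro m; simp [Sat]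
  | gt y c => intro m; simp [Sat]
  | lt y c => intro m; simp [Sat]
  | neg φ ih => intro m; simp only [Sat]; rw [ih m]
  | or φ ψ ih1 ih2 => intro m; simp only [Sat]; rw [ih1 m, ih2 m]
  | next φ ih =>
    intro m
    simp only [Sat]
    have := ih (m + 1)
    rwa [show m + 1 + k = m + k + 1 by omega] at this
  | untl i j hij φ ψ ih1 ih2 =>
    intro m
    simp only [Sat]
    constructor
    · rintro ⟨l, ⟨h1, h2⟩, hψ, hφ⟩
      have hkl : k ≤ l := by
        have hk1 : (k : ℕ∞) ≤ ((m + k : ℕ) : ℕ∞) + i := by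
          refine le_trans ?_ le_self_add
          exact_mod_cast Nat.le_add_left k m
        exact_mod_cast le_trans hk1 h1
      refine ⟨l - k, ⟨?_, ?_⟩, ?_, ?_⟩
      · have e1 : ((m + k : ℕ) : ℕ∞) + i = (↑m + i) + ↑k := by push_cast; ring
        have e2 : ((l : ℕ) : ℕ∞) = ↑(l - k) + ↑k := by
          rw [← Nat.cast_add]; congr 1; omega
        rw [e1, e2] at h1
        exact enat_cancel h1
      · have e1 : ((m + k : ℕ) : ℕ∞) + j = (↑m + j) + ↑k := by push_cast; ring
        have e2 : ((l : ℕ) : ℕ∞) = ↑(l - k) + ↑k := by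
          rw [← Nat.cast_add]; congr 1; omega
        rw [e1, e2] at h2
        exact enat_cancel h2
      · have := (ih2 (l - k)).mp
        rw [show l - k + k = l by omega] at this
        exact this hψ
      · intro m' hm1 hm2
        have := (ih1 m').mp (hφ (m' + k) (by omega) (by omega))
        exact this
    · rintro ⟨l', ⟨h1, h2⟩, hψ, hφ⟩
      refine ⟨l' + k, ⟨?_, ?_⟩, ?_, ?_⟩
      · have e1 : ((m + k : ℕ) : ℕ∞) + i = (↑m + i) + ↑k := by push_cast; ring
        have e2 : ((l' + k : ℕ) : ℕ∞) = ↑l' + ↑k := by push_cast; ring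
        rw [e1, e2]
        exact add_le_add h1 le_rfl
      · have e1 : ((m + k : ℕ) : ℕ∞) + j = (↑m + j) + ↑k := by push_cast; ring
        have e2 : ((l' + k : ℕ) : ℕ∞) = ↑l' + ↑k := by push_cast; ring
        rw [e1, e2]
        exact add_le_add h2 le_rfl
      · exact (ih2 l').mpr hψ
      · intro m' hm1 hm2
        have hkm : k ≤ m' := le_trans (Nat.le_add_left k m) hm1
        have := (ih1 (m' - k)).mpr (hφ (m' - k) (by omega) (by omega))
        rwa [show m' - k + k = m' by omega] at this

end STLpaper

open STLpaper in
/-- Soundness of the lower end of the robust satisfaction interval: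
if `inf(RoSI(φ,σ,k)) > 0` then `σ[k..|σ|−1] ∈ ⟦φ⟧_inf`. -/
theorem RoSIinf_pos_mem_infSem (Y : Type) [Fintype Y] (φ : STL Y)
    (σ : List (Y → ℝ)) (k : ℕ) (h : 0 < RoSIinf φ σ k) :
    σ.drop k ∈ infSem φ := by
  intro σ'
  set L := σ.length with hL
  set σ'' : ℕ → Y → ℝ := fun n => σ' (n - (k - L)) with hσ''
  have key : (fun n => cat σ σ'' (n + k)) = cat (σ.drop k) σ' := by
    funext n
    simp only [cat, List.length_drop]
    by_cases h1 : n + k < L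
    · rw [dif_pos h1, dif_pos (show n < L - k by omega)]
      simp only [List.get_eq_getElem, List.getElem_drop]
      congr 1
      omega
    · rw [dif_neg h1, dif_neg (show ¬ n < L - k by omega)]
      simp only [hσ'']
      rw [show n + k - L - (k - L) = n - (L - k) from by omega]
  have hpos : 0 < Rob (cat σ σ'') φ k :=
    lt_of_lt_of_le h (iInf_le _ σ'')
  have hsat : Sat (cat σ σ'') φ k := (rob_sat _ φ k).1 hpos
  have := (sat_shift (cat σ σ'') k φ 0).mp (by simpa using hsat)
  rwa [key] at this
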